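/- Let a₀, a₁, b, q ∈ ℂ* with a₀·a₁ = q, and let f₀, f₁, f₂ ∈ ℂ* with f₀·f₁·f₂ = 1. Define s₀ acting by (a₀, a₁, b) ↦ (1/a₀, a₀²·a₁, b/a₀) and (f₀, f₁, f₂) ↦ (f₀·(a₀f₀+f₁+a₀)/(f₀+f₁+1), f₁·(a₀f₀+f₁+1)/(a₀(f₀+f₁+1)), a₀f₂(f₀+f₁+1)²/((a₀f₀+f₁+a₀)(a₀f₀+f₁+1))). Then s₀ is an involution: applying s₀ twice returns (a₀, a₁, b, f₀, f₁, f₂) to its original value, and the transformed variables still satisfy f₀'·f₁'·f₂' = 1 (whenever all denominators are nonzero). -/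

import Mathlib

/-- The generator `s₀` of the birational representation of the extended affine Weyl
group of type `(A₁+A₁)⁽¹⁾`, acting on `(a₀, a₁, b, f₀, f₁, f₂)`. -/
noncomputable def dkdvS0 (p : ℂ × ℂ × ℂ × ℂ × ℂ × ℂ) : ℂ × ℂ × ℂ × ℂ × ℂ × ℂ :=
  match p with
  | (a₀, a₁, b, f₀, f₁, f₂) =>
    (a₀⁻¹, a₀ ^ 2 * a₁, b / a₀,
     f₀ * (a₀ * f₀ + f₁ + a₀) / (f₀ + f₁ + 1),
     f₁ * (a₀ * f₀ + f₁ + 1) / (a₀ * (f₀ + f₁ + 1)),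
     a₀ * f₂ * (f₀ + f₁ + 1) ^ 2 / ((a₀ * f₀ + f₁ + a₀) * (a₀ * f₀ + f₁ + 1)))

set_option maxHeartbeats 2000000 in
theorem stmt_11 (a₀ a₁ b q f₀ f₁ f₂ a₀' a₁' b' f₀' f₁' f₂' : ℂ)
    (ha₀ : a₀ ≠ 0) (ha₁ : a₁ ≠ 0) (hb : b ≠ 0) (hq : q ≠ 0)
    (hf₀ : f₀ ≠ 0) (hf₁ : f₁ ≠ 0) (hf₂ : f₂ ≠ 0)
    (haq : a₀ * a₁ = q) (hfff : f₀ * f₁ * f₂ = 1)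
    (h' : dkdvS0 (a₀, a₁, b, f₀, f₁, f₂) = (a₀', a₁', b', f₀', f₁', f₂'))
    (hd1 : f₀ + f₁ + 1 ≠ 0) (hd2 : a₀ * f₀ + f₁ + a₀ ≠ 0) (hd3 : a₀ * f₀ + f₁ + 1 ≠ 0)
    (hd1' : f₀' + f₁' + 1 ≠ 0) (hd2' : a₀' * f₀' + f₁' + a₀' ≠ 0)
    (hd3' : a₀' * f₀' + f₁' + 1 ≠ 0) :
    dkdvS0 (a₀', a₁', b', f₀', f₁', f₂') = (a₀, a₁, b, f₀, f₁, f₂)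
      ∧ f₀' * f₁' * f₂' = 1 := by
  simp only [dkdvS0, Prod.mk.injEq] at h' ⊢
  obtain ⟨e1, e2, e3, e4, e5, e6⟩ := h'
  subst e1 e2 e3 e4 e5 e6
  have k1 : f₀ * (a₀ * f₀ + f₁ + a₀) / (f₀ + f₁ + 1) +
      f₁ * (a₀ * f₀ + f₁ + 1) / (a₀ * (f₀ + f₁ + 1)) + 1 =
      (a₀ * f₀ + f₁ + a₀) * (a₀ * f₀ + f₁ + 1) / (a₀ * (f₀ + f₁ + 1)) := by
    field_simp
    ring
  have k2 : a₀⁻¹ * (f₀ * (a₀ * f₀ + f₁ + a₀) / (f₀ + f₁ + 1)) +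
      f₁ * (a₀ * f₀ + f₁ + 1) / (a₀ * (f₀ + f₁ + 1)) + a₀⁻¹ =
      (a₀ * f₀ + f₁ + 1) / a₀ := by
    field_simp
    ring
  have k3 : a₀⁻¹ * (f₀ * (a₀ * f₀ + f₁ + a₀) / (f₀ + f₁ + 1)) +
      f₁ * (a₀ * f₀ + f₁ + 1) / (a₀ * (f₀ + f₁ + 1)) + 1 =
      (a₀ * f₀ + f₁ + a₀) / a₀ := by
    field_simp
    ring
  rw [k1, k2, k3]
  refine ⟨⟨?_, ?_, ?_, ?_, ?_, ?_⟩, ?_⟩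
  · simp [ha₀]
  · field_simp
  · field_simp
  · generalize hA : a₀ * f₀ + f₁ + a₀ = A at hd2 ⊢
    generalize hB : a₀ * f₀ + f₁ + 1 = B at hd3 ⊢
    generalize hC : f₀ + f₁ + 1 = C at hd1 ⊢
    field_simp
  · generalize hA : a₀ * f₀ + f₁ + a₀ = A at hd2 ⊢
    generalize hB : a₀ * f₀ + f₁ + 1 = B at hd3 ⊢
    generalize hC : f₀ + f₁ + 1 = C at hd1 ⊢
    field_simp
  · generalize hA : a₀ * f₀ + f₁ + a₀ = A at hd2 ⊢
    generalize hB : a₀ * f₀ + f₁ + 1 = B at hd3 ⊢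
    generalize hC : f₀ + f₁ + 1 = C at hd1 ⊢
    field_simp
  · generalize hA : a₀ * f₀ + f₁ + a₀ = A at hd2 ⊢
    generalize hB : a₀ * f₀ + f₁ + 1 = B at hd3 ⊢
    generalize hC : f₀ + f₁ + 1 = C at hd1 ⊢
    field_simp
    linear_combination hfff
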